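/- arXiv:2509.11309 — 4 statements merged into one kernel-verified Lean document; each statement's English description precedes it below -/
import Mathlib

section
/- For every T > 0 there exists a constant C_T such that for all x ∈ ℝ² with x ≠ 0, ∫₀^T G_{√s}(x) ds ≤ C_T (1 + |log |x||). -/
open MeasureTheory Real

/-- The centred Gaussian density on `ℝ²` with standard deviation `σ`:
`G_σ(x) = (2πσ²)⁻¹ exp(−|x|²/(2σ²))`. -/
noncomputable def G (σ : ℝ) (x : EuclideanSpace ℝ (Fin 2)) : ℝ :=
  (2 * π * σ ^ 2)⁻¹ * Real.exp (-‖x‖ ^ 2 / (2 * σ ^ 2))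

lemma G_eq {s : ℝ} (hs : 0 < s) (x : EuclideanSpace ℝ (Fin 2)) :
    G (Real.sqrt s) x = (2 * π * s)⁻¹ * Real.exp (-‖x‖ ^ 2 / (2 * s)) := by
  unfold G
  rw [Real.sq_sqrt hs.le]

lemma boundA {r s : ℝ} (hs : 0 < s) (hr : 0 < r) (h : s ≤ r ^ 2) :
    (2 * π * s)⁻¹ * Real.exp (-r ^ 2 / (2 * s)) ≤ (π * r ^ 2)⁻¹ := by
  have hπ : 0 < π := Real.pi_pos
  have hr2 : 0 < r ^ 2 := by positivity
  have ht : 0 < r ^ 2 / (2 * s) := by positivity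
  have hexp : Real.exp (-r ^ 2 / (2 * s)) ≤ (r ^ 2 / (2 * s))⁻¹ := by
    rw [neg_div, Real.exp_neg]
    apply inv_anti₀ ht
    calc r ^ 2 / (2 * s) ≤ r ^ 2 / (2 * s) + 1 := by linarith
    _ ≤ Real.exp (r ^ 2 / (2 * s)) := Real.add_one_le_exp _
  calc (2 * π * s)⁻¹ * Real.exp (-r ^ 2 / (2 * s))
      ≤ (2 * π * s)⁻¹ * (r ^ 2 / (2 * s))⁻¹ :=
        mul_le_mul_of_nonneg_left hexp (by positivity)
    _ = (π * r ^ 2)⁻¹ := by field_simp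

lemma boundB {r s : ℝ} (hs : 0 < s) (hr : 0 ≤ r) :
    (2 * π * s)⁻¹ * Real.exp (-r ^ 2 / (2 * s)) ≤ (2 * π * s)⁻¹ := by
  have hπ : 0 < π := Real.pi_pos
  have : Real.exp (-r ^ 2 / (2 * s)) ≤ 1 := Real.exp_le_one_iff.2
    (div_nonpos_of_nonpos_of_nonneg (by nlinarith [sq_nonneg r]) (by positivity))
  calc (2 * π * s)⁻¹ * Real.exp (-r ^ 2 / (2 * s)) ≤ (2 * π * s)⁻¹ * 1 :=
        mul_le_mul_of_nonneg_left this (by positivity)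
    _ = (2 * π * s)⁻¹ := mul_one _

/-- For every `T > 0` there exists a constant `C_T` such that for all nonzero `x ∈ ℝ²`,
`∫₀^T G_{√s}(x) ds ≤ C_T (1 + |log |x||)`. -/
theorem stmt1 (T : ℝ) (hT : 0 < T) :
    ∃ C : ℝ, ∀ x : EuclideanSpace ℝ (Fin 2), x ≠ 0 →
      ∫ s in Set.Ioc (0 : ℝ) T, G (Real.sqrt s) x ≤ C * (1 + |Real.log ‖x‖|) := by
  have hπ : 0 < π := Real.pi_pos
  refine ⟨π⁻¹ + π⁻¹ + (2 * π)⁻¹ * |Real.log T|, fun x hx => ?_⟩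
  set r : ℝ := ‖x‖ with hrdef
  have hr : 0 < r := norm_pos_iff.2 hx
  have hr2 : 0 < r ^ 2 := by positivity
  have hL : (0:ℝ) ≤ |Real.log r| := abs_nonneg _
  have hLT : (0:ℝ) ≤ |Real.log T| := abs_nonneg _
  by_cases hcase : T ≤ r ^ 2
  · -- the integrand is bounded by the constant (π r²)⁻¹
    have hle : ∫ s in Set.Ioc (0:ℝ) T, G (Real.sqrt s) x
        ≤ ∫ s in Set.Ioc (0:ℝ) T, (π * r ^ 2)⁻¹ := by
      apply integral_mono_of_nonneg
      · filter_upwards [self_mem_ae_restrict (measurableSet_Ioc (a := (0:ℝ)) (b := T))]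
          with s hs
        have hs0 : 0 < s := hs.1
        rw [G_eq hs0]
        positivity
      · exact integrableOn_const measure_Ioc_lt_top.ne
      · filter_upwards [self_mem_ae_restrict (measurableSet_Ioc (a := (0:ℝ)) (b := T))]
          with s hs
        rw [G_eq hs.1]
        exact boundA hs.1 hr (hs.2.trans hcase)
    rw [setIntegral_const, measureReal_def, Real.volume_Ioc, smul_eq_mul,
      ENNReal.toReal_ofReal (by linarith)] at hle
    have h1 : (T - 0) * (π * r ^ 2)⁻¹ ≤ π⁻¹ := by
      rw [sub_zero]
      calc T * (π * r ^ 2)⁻¹ ≤ r ^ 2 * (π * r ^ 2)⁻¹ :=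
            mul_le_mul_of_nonneg_right hcase (by positivity)
        _ = π⁻¹ := by field_simp
    have hπi : 0 < π⁻¹ := by positivity
    have hi2π : (0:ℝ) < (2 * π)⁻¹ := by positivity
    nlinarith [mul_nonneg hπi.le hL, mul_nonneg (mul_nonneg hi2π.le hLT) hL,
      mul_nonneg hi2π.le hLT]
  · push_neg at hcase
    set h : ℝ → ℝ := fun s => if s ≤ r ^ 2 then (π * r ^ 2)⁻¹ else (2 * π * s)⁻¹ with hdef
    have hEq1 : Set.EqOn (fun _ => (π * r ^ 2)⁻¹) h (Set.Ioc 0 (r ^ 2)) :=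
      fun s hs => (if_pos hs.2).symm
    have hEq2 : Set.EqOn (fun s => (2 * π * s)⁻¹) h (Set.Ioc (r ^ 2) T) :=
      fun s hs => (if_neg (not_le.2 hs.1)).symm
    have hi1 : IntegrableOn h (Set.Ioc 0 (r ^ 2)) :=
      (integrableOn_const measure_Ioc_lt_top.ne).congr_fun hEq1 measurableSet_Ioc
    have hi2' : IntervalIntegrable (fun s : ℝ => (2 * π * s)⁻¹) volume (r ^ 2) T := by
      apply intervalIntegral.intervalIntegrable_inv
      · intro y hy
        rw [Set.uIcc_of_le hcase.le] at hy
        have : 0 < 2 * π * y := by nlinarith [lt_of_lt_of_le hr2 hy.1]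
        exact ne_of_gt this
      · exact ((continuous_const.mul continuous_id).continuousOn)
    have hi2 : IntegrableOn h (Set.Ioc (r ^ 2) T) :=
      ((intervalIntegrable_iff_integrableOn_Ioc_of_le hcase.le).1 hi2').congr_fun hEq2
        measurableSet_Ioc
    have hunion : Set.Ioc (0:ℝ) (r ^ 2) ∪ Set.Ioc (r ^ 2) T = Set.Ioc 0 T :=
      Set.Ioc_union_Ioc_eq_Ioc hr2.le hcase.le
    have hInt : IntegrableOn h (Set.Ioc 0 T) := by
      rw [← hunion]; exact hi1.union hi2
    have hle : ∫ s in Set.Ioc (0:ℝ) T, G (Real.sqrt s) x ≤ ∫ s in Set.Ioc (0:ℝ) T, h s := by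
      apply integral_mono_of_nonneg
      · filter_upwards [self_mem_ae_restrict (measurableSet_Ioc (a := (0:ℝ)) (b := T))]
          with s hs
        have hs0 : 0 < s := hs.1
        rw [G_eq hs0]
        positivity
      · exact hInt
      · filter_upwards [self_mem_ae_restrict (measurableSet_Ioc (a := (0:ℝ)) (b := T))]
          with s hs
        rw [G_eq hs.1]
        simp only [hdef]
        split_ifs with hsr
        · exact boundA hs.1 hr hsr
        · exact boundB hs.1 hr.le
    have hval : ∫ s in Set.Ioc (0:ℝ) T, h s
        = π⁻¹ + (2 * π)⁻¹ * (Real.log T - 2 * Real.log r) := by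
      rw [← hunion, setIntegral_union (Set.Ioc_disjoint_Ioc_of_le le_rfl) measurableSet_Ioc hi1 hi2]
      have e1 : ∫ s in Set.Ioc (0:ℝ) (r ^ 2), h s = π⁻¹ := by
        rw [← setIntegral_congr_fun measurableSet_Ioc hEq1, setIntegral_const, measureReal_def, Real.volume_Ioc,
          smul_eq_mul, ENNReal.toReal_ofReal (by linarith)]
        field_simp
        ring
      have e2 : ∫ s in Set.Ioc (r ^ 2) T, h s
          = (2 * π)⁻¹ * (Real.log T - 2 * Real.log r) := by
        rw [← setIntegral_congr_fun measurableSet_Ioc hEq2]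
        have : ∀ s : ℝ, (2 * π * s)⁻¹ = (2 * π)⁻¹ * s⁻¹ := by
          intro s; rw [mul_inv]
        simp_rw [this]
        rw [integral_const_mul, ← intervalIntegral.integral_of_le hcase.le,
          integral_inv_of_pos hr2 hT, Real.log_div (ne_of_gt hT) (ne_of_gt hr2),
          Real.log_pow]
        push_cast
        ring
      rw [e1, e2]
    rw [hval] at hle
    have hlogT : Real.log T ≤ |Real.log T| := le_abs_self _
    have hlogr : -Real.log r ≤ |Real.log r| := neg_le_abs _
    have hπi : 0 < π⁻¹ := by positivity
    have key : π⁻¹ + (2 * π)⁻¹ * (Real.log T - 2 * Real.log r)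
        ≤ (π⁻¹ + π⁻¹ + (2 * π)⁻¹ * |Real.log T|) * (1 + |Real.log r|) := by
      have h2π : (2 * π)⁻¹ * 2 = π⁻¹ := by field_simp
      have hi2π : (0:ℝ) < (2 * π)⁻¹ := by positivity
      nlinarith [mul_nonneg hπi.le hL, mul_nonneg hLT hL, mul_nonneg hi2π.le hLT,
        mul_le_mul_of_nonneg_left hlogT hi2π.le,
        mul_le_mul_of_nonneg_left hlogr hπi.le]
    linarith
end

section
/- Let n ≥ 1 and let (α_{ij})_{1 ≤ i ≠ j ≤ n} be nonnegative integers. There exists a constant C, depending only on n and the α_{ij}, such that for every λ ∈ (0, e^{-1}], ⨍_{B_λ} ⋯ ⨍_{B_λ} ∏_{i ≠ j} (1 + |log |x_i − x_j||)^{2α_{ij}} dx₁ ⋯ dxₙ ≤ C · |log λ|^{2 Σ_{i≠j} α_{ij}}. In particular all these integrals are finite. -/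
open MeasureTheory Real

open Metric
open scoped ENNReal

set_option maxHeartbeats 1000000

local notation "E2" => EuclideanSpace ℝ (Fin 2)

lemma stmt3_measurable_hM (M : ℕ) :
    Measurable fun z : E2 => ENNReal.ofReal ((1 + |Real.log ‖z‖|) ^ M) := by
  apply ENNReal.measurable_ofReal.comp
  have : Measurable fun z : E2 => Real.log ‖z‖ :=
    Real.measurable_log.comp continuous_norm.measurable
  fun_prop

lemma stmt3_radial (M : ℕ) : ∃ D : ℝ≥0∞, D ≠ ⊤ ∧ ∀ r : ℝ, 0 < r → r ≤ 1 →
    ∫⁻ z in ball (0 : E2) r, ENNReal.ofReal ((1 + |Real.log ‖z‖|) ^ M)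
      ≤ D * ENNReal.ofReal (r ^ 2 * (1 - Real.log r) ^ M) := by
  classical
  set V1 : ℝ≥0∞ := volume (ball (0 : E2) 1) with hV1
  set g : ℕ → ℝ := fun k => ((k : ℝ) + 2) ^ M * (4⁻¹ : ℝ) ^ k with hgdef
  have hg0 : Summable (fun k : ℕ => (k : ℝ) ^ M * (4⁻¹ : ℝ) ^ k) := by
    simpa using summable_pow_mul_geometric_of_norm_lt_one (R := ℝ) M (r := 4⁻¹) (by norm_num)
  have hg2 : Summable (fun k : ℕ => ((k + 2 : ℕ) : ℝ) ^ M * (4⁻¹ : ℝ) ^ (k + 2)) :=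
    (summable_nat_add_iff 2).mpr hg0
  have hgsum : Summable g := by
    have := hg2.mul_left (16 : ℝ)
    refine this.congr fun k => ?_
    push_cast
    ring
  have hgnn : ∀ k, 0 ≤ g k := fun k => by positivity
  set S : ℝ≥0∞ := ∑' k, ENNReal.ofReal (g k) with hS
  have hSne : S ≠ ⊤ := by
    rw [hS, ← ENNReal.ofReal_tsum_of_nonneg hgnn hgsum]
    exact ENNReal.ofReal_ne_top
  refine ⟨V1 * S, ENNReal.mul_ne_top measure_ball_lt_top.ne hSne, fun r hr hr1 => ?_⟩
  set A : ℕ → Set E2 := fun k => ball (0 : E2) (r * 2⁻¹ ^ k) \ ball 0 (r * 2⁻¹ ^ (k + 1))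
    with hA
  have hcover : ball (0 : E2) r \ {0} ⊆ ⋃ k, A k := by
    intro z hz
    have hzr : ‖z‖ < r := by simpa [mem_ball_zero_iff] using hz.1
    have hz0 : (0 : ℝ) < ‖z‖ := norm_pos_iff.mpr hz.2
    have hex : ∃ k : ℕ, r * 2⁻¹ ^ k ≤ ‖z‖ := by
      obtain ⟨k, hk⟩ := exists_pow_lt_of_lt_one (x := ‖z‖ / r) (by positivity)
        (by norm_num : (2⁻¹ : ℝ) < 1)
      exact ⟨k, by rw [mul_comm]; exact le_of_lt ((lt_div_iff₀ hr).mp hk)⟩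
    have hspec := Nat.find_spec hex
    have hk0 : Nat.find hex ≠ 0 := by
      intro h
      rw [h] at hspec
      simp only [pow_zero, mul_one] at hspec
      exact absurd hzr (not_lt.mpr hspec)
    obtain ⟨m, hm⟩ : ∃ m, Nat.find hex = m + 1 := ⟨Nat.find hex - 1, (Nat.succ_pred_eq_of_pos
      (Nat.pos_of_ne_zero hk0)).symm⟩
    refine Set.mem_iUnion.mpr ⟨m, ?_, ?_⟩
    · have := Nat.find_min hex (m := m) (by omega)
      simpa [mem_ball_zero_iff] using (not_le.mp this)
    · rw [← hm]
      simpa [mem_ball_zero_iff] using not_lt.mpr hspec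
  have hle1 : ∫⁻ z in ball (0 : E2) r, ENNReal.ofReal ((1 + |Real.log ‖z‖|) ^ M)
      ≤ ∑' k, ∫⁻ z in A k, ENNReal.ofReal ((1 + |Real.log ‖z‖|) ^ M) := by
    calc ∫⁻ z in ball (0 : E2) r, ENNReal.ofReal ((1 + |Real.log ‖z‖|) ^ M)
        ≤ ∫⁻ z in (ball (0 : E2) r \ {0}) ∪ {0},
            ENNReal.ofReal ((1 + |Real.log ‖z‖|) ^ M) := by
          apply lintegral_mono_set
          intro z hz
          by_cases h : z = 0
          · exact Or.inr (by simp [h])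
          · exact Or.inl ⟨hz, h⟩
      _ ≤ (∫⁻ z in ball (0 : E2) r \ {0}, ENNReal.ofReal ((1 + |Real.log ‖z‖|) ^ M))
            + ∫⁻ z in ({0} : Set E2), ENNReal.ofReal ((1 + |Real.log ‖z‖|) ^ M) :=
          lintegral_union_le _ _ _
      _ ≤ (∫⁻ z in ⋃ k, A k, ENNReal.ofReal ((1 + |Real.log ‖z‖|) ^ M)) + 0 := by
          gcongr
          · exact le_of_eq (setLIntegral_measure_zero _ _ (measure_singleton 0))
      _ ≤ ∑' k, ∫⁻ z in A k, ENNReal.ofReal ((1 + |Real.log ‖z‖|) ^ M) := by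
          rw [add_zero]; exact lintegral_iUnion_le _ _
  have hterm : ∀ k : ℕ, ∫⁻ z in A k, ENNReal.ofReal ((1 + |Real.log ‖z‖|) ^ M)
      ≤ ENNReal.ofReal (g k) * (ENNReal.ofReal (r ^ 2 * (1 - Real.log r) ^ M) * V1) := by
    intro k
    have hrad : (0 : ℝ) < r * 2⁻¹ ^ k := by positivity
    have hptwise : ∀ z ∈ A k, ENNReal.ofReal ((1 + |Real.log ‖z‖|) ^ M)
        ≤ ENNReal.ofReal (((1 - Real.log r) * ((k : ℝ) + 2)) ^ M) := by
      intro z hz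
      have h1 : ‖z‖ < r * 2⁻¹ ^ k := by simpa [mem_ball_zero_iff] using hz.1
      have h2 : r * 2⁻¹ ^ (k + 1) ≤ ‖z‖ := by
        have := hz.2; rw [mem_ball_zero_iff] at this; exact not_lt.mp this
      have hzpos : (0 : ℝ) < ‖z‖ := lt_of_lt_of_le (by positivity) h2
      have hz1 : ‖z‖ ≤ 1 := by
        calc ‖z‖ ≤ r * 2⁻¹ ^ k := le_of_lt h1
        _ ≤ 1 * 1 := by
            apply mul_le_mul hr1 _ (by positivity) zero_le_one
            exact pow_le_one₀ (by norm_num) (by norm_num)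
        _ = 1 := mul_one 1
      have hlog_le : |Real.log ‖z‖| ≤ -Real.log r + ((k : ℝ) + 1) * Real.log 2 := by
        rw [abs_of_nonpos (Real.log_nonpos (norm_nonneg z) hz1)]
        have := Real.log_le_log (by positivity : (0:ℝ) < r * 2⁻¹ ^ (k+1)) h2
        rw [Real.log_mul hr.ne' (by positivity), Real.log_pow, Real.log_inv] at this
        push_cast at this
        linarith
      have hlog2 : Real.log 2 ≤ 1 := by
        have := Real.log_le_sub_one_of_pos (by norm_num : (0:ℝ) < 2)
        linarith
      have hlogr : Real.log r ≤ 0 := Real.log_nonpos hr.le hr1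
      have hkey : 1 + |Real.log ‖z‖| ≤ (1 - Real.log r) * ((k : ℝ) + 2) := by
        have h3 : ((k : ℝ) + 1) * Real.log 2 ≤ ((k : ℝ) + 1) * (1 - Real.log r) := by
          apply mul_le_mul_of_nonneg_left _ (by positivity)
          nlinarith
        nlinarith [hlog_le]
      apply ENNReal.ofReal_le_ofReal
      exact pow_le_pow_left₀ (by positivity) hkey M
    calc ∫⁻ z in A k, ENNReal.ofReal ((1 + |Real.log ‖z‖|) ^ M)
        ≤ ∫⁻ _ in A k, ENNReal.ofReal (((1 - Real.log r) * ((k : ℝ) + 2)) ^ M) :=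
          setLIntegral_mono measurable_const hptwise
      _ = ENNReal.ofReal (((1 - Real.log r) * ((k : ℝ) + 2)) ^ M) * volume (A k) :=
          setLIntegral_const _ _
      _ ≤ ENNReal.ofReal (((1 - Real.log r) * ((k : ℝ) + 2)) ^ M)
            * (ENNReal.ofReal ((r * 2⁻¹ ^ k) ^ 2) * V1) := by
          gcongr
          have := Measure.addHaar_ball (volume : Measure E2) (0 : E2) hrad.le
          rw [finrank_euclideanSpace_fin] at this
          calc volume (A k) ≤ volume (ball (0 : E2) (r * 2⁻¹ ^ k)) :=
                measure_mono Set.diff_subset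
            _ = ENNReal.ofReal ((r * 2⁻¹ ^ k) ^ 2) * V1 := this
      _ = ENNReal.ofReal (g k) * (ENNReal.ofReal (r ^ 2 * (1 - Real.log r) ^ M) * V1) := by
          have hlogr : Real.log r ≤ 0 := Real.log_nonpos hr.le hr1
          have hc : (0:ℝ) ≤ ((1 - Real.log r) * ((k : ℝ) + 2)) ^ M :=
            pow_nonneg (by nlinarith) M
          rw [← mul_assoc, ← mul_assoc, ← ENNReal.ofReal_mul hc,
            ← ENNReal.ofReal_mul (hgnn k)]
          congr 2
          rw [hgdef]
          rw [mul_pow, mul_pow]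
          have : ((2:ℝ)⁻¹ ^ k) ^ 2 = (4⁻¹ : ℝ) ^ k := by
            rw [← pow_mul, mul_comm k 2, pow_mul]; norm_num
          rw [this]
          ring
  calc ∫⁻ z in ball (0 : E2) r, ENNReal.ofReal ((1 + |Real.log ‖z‖|) ^ M)
      ≤ ∑' k, ∫⁻ z in A k, ENNReal.ofReal ((1 + |Real.log ‖z‖|) ^ M) := hle1
    _ ≤ ∑' k, ENNReal.ofReal (g k) * (ENNReal.ofReal (r ^ 2 * (1 - Real.log r) ^ M) * V1) :=
        ENNReal.tsum_le_tsum hterm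
    _ = S * (ENNReal.ofReal (r ^ 2 * (1 - Real.log r) ^ M) * V1) := by
        rw [hS, ENNReal.tsum_mul_right]
    _ = V1 * S * ENNReal.ofReal (r ^ 2 * (1 - Real.log r) ^ M) := by ring

lemma stmt3_fubini {n : ℕ} (i j : Fin n) (hij : i ≠ j) (h : E2 → ℝ≥0∞) (hh : Measurable h)
    (s : Set E2) (hs : MeasurableSet s) :
    ∫⁻ x : Fin n → E2 in Set.univ.pi (fun _ => s), h (x i - x j)
      = volume s ^ (n - 2) * ∫⁻ a in s, ∫⁻ b in s, h (a - b) := by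
  classical
  set μ : Fin n → Measure E2 := fun _ => volume with hμ
  set c : ℝ≥0∞ := volume s with hc
  set f : (Fin n → E2) → ℝ≥0∞ :=
    fun x => h (x i - x j) * ∏ k, s.indicator (1 : E2 → ℝ≥0∞) (x k) with hfdef
  have hind : Measurable (s.indicator (1 : E2 → ℝ≥0∞)) :=
    measurable_const.indicator hs
  have hf : Measurable f := by
    apply Measurable.mul
    · exact hh.comp ((measurable_pi_apply i).sub (measurable_pi_apply j))
    · exact Finset.measurable_prod _ fun k _ => hind.comp (measurable_pi_apply k)
  have hLHS : ∫⁻ x : Fin n → E2 in Set.univ.pi (fun _ => s), h (x i - x j)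
      = ∫⁻ x, f x ∂(Measure.pi μ) := by
    rw [← lintegral_indicator (MeasurableSet.univ_pi (fun _ => hs))]
    rw [show (volume : Measure (Fin n → E2)) = Measure.pi μ from volume_pi]
    congr 1
    funext x
    by_cases hx : x ∈ Set.univ.pi (fun _ : Fin n => s)
    · rw [Set.indicator_of_mem hx]
      have h1 : ∀ k, s.indicator (1 : E2 → ℝ≥0∞) (x k) = 1 := fun k => by
        rw [Set.indicator_of_mem (hx k (Set.mem_univ k))]; rfl
      simp [hfdef, h1]
    · rw [Set.indicator_of_notMem hx]
      rw [Set.mem_univ_pi] at hx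
      push_neg at hx
      obtain ⟨k0, hk0⟩ := hx
      have : ∏ k, s.indicator (1 : E2 → ℝ≥0∞) (x k) = 0 :=
        Finset.prod_eq_zero (Finset.mem_univ k0) (Set.indicator_of_notMem hk0 1)
      simp [hfdef, this]
  have claim : ∀ t : Finset (Fin n), i ∉ t → j ∉ t →
      (∫⋯∫⁻_t, f ∂μ) = fun x => c ^ t.card *
        (h (x i - x j) * ∏ k ∈ tᶜ, s.indicator (1 : E2 → ℝ≥0∞) (x k)) := by
    intro t
    induction t using Finset.induction with
    | empty => intro _ _; simp [hfdef, lmarginal_empty]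
    | @insert a t ha ih =>
      intro hi hj
      have hi' : i ∉ t := fun hmem => hi (Finset.mem_insert_of_mem hmem)
      have hj' : j ∉ t := fun hmem => hj (Finset.mem_insert_of_mem hmem)
      have hai : i ≠ a := fun hiq => hi (hiq ▸ Finset.mem_insert_self a t)
      have haj : j ≠ a := fun hjq => hj (hjq ▸ Finset.mem_insert_self a t)
      funext x
      rw [lmarginal_insert _ hf ha]
      rw [ih hi' hj']
      simp only
      have haT : a ∈ tᶜ := Finset.mem_compl.mpr ha
      have hsplit : ∀ y : E2, ∏ k ∈ tᶜ, s.indicator (1 : E2 → ℝ≥0∞) (Function.update x a y k)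
          = s.indicator (1 : E2 → ℝ≥0∞) y * ∏ k ∈ (insert a t)ᶜ, s.indicator (1 : E2 → ℝ≥0∞) (x k) := by
        intro y
        rw [← Finset.mul_prod_erase _ _ haT, Function.update_self]
        congr 1
        rw [Finset.compl_insert]
        apply Finset.prod_congr rfl
        intro k hk
        rw [Function.update_of_ne (Finset.ne_of_mem_erase hk)]
      have hupd : ∀ y : E2, Function.update x a y i = x i ∧ Function.update x a y j = x j :=
        fun y => ⟨Function.update_of_ne hai _ _, Function.update_of_ne haj _ _⟩
      calc ∫⁻ y, c ^ t.card * (h (Function.update x a y i - Function.update x a y j) *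
              ∏ k ∈ tᶜ, s.indicator (1 : E2 → ℝ≥0∞) (Function.update x a y k)) ∂(μ a)
          = ∫⁻ y, (c ^ t.card * (h (x i - x j) *
              ∏ k ∈ (insert a t)ᶜ, s.indicator (1 : E2 → ℝ≥0∞) (x k))) * s.indicator (1 : E2 → ℝ≥0∞) y ∂(μ a) := by
            congr 1
            funext y
            rw [(hupd y).1, (hupd y).2, hsplit y]
            ring
        _ = (c ^ t.card * (h (x i - x j) *
              ∏ k ∈ (insert a t)ᶜ, s.indicator (1 : E2 → ℝ≥0∞) (x k))) * ∫⁻ y, s.indicator (1 : E2 → ℝ≥0∞) y ∂(μ a) :=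
            lintegral_const_mul _ hind
        _ = c ^ (insert a t).card * (h (x i - x j) *
              ∏ k ∈ (insert a t)ᶜ, s.indicator (1 : E2 → ℝ≥0∞) (x k)) := by
            have : ∫⁻ y, s.indicator (1 : E2 → ℝ≥0∞) y ∂(μ a) = c := by
              rw [hμ]; exact lintegral_indicator_one hs
            rw [this, Finset.card_insert_of_notMem ha, pow_succ]
            ring
  have hij2 : ({i, j} : Finset (Fin n)).card = 2 := by
    rw [Finset.card_insert_of_notMem (by simp [hij]), Finset.card_singleton]
  have hiU : i ∉ ({i, j} : Finset (Fin n))ᶜ := by simp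
  have hjU : j ∉ ({i, j} : Finset (Fin n))ᶜ := by simp
  have hu := claim ({i, j} : Finset (Fin n))ᶜ hiU hjU
  have hcard : (({i, j} : Finset (Fin n))ᶜ).card = n - 2 := by
    rw [Finset.card_compl, hij2, Fintype.card_fin]
  have hunion : ({i, j} : Finset (Fin n)) ∪ ({i, j} : Finset (Fin n))ᶜ = Finset.univ :=
    Finset.union_compl _
  rw [hLHS, lintegral_eq_lmarginal_univ (fun _ => (0 : E2)), ← hunion,
    lmarginal_union μ f hf (disjoint_compl_right), hu]
  set g : (Fin n → E2) → ℝ≥0∞ := fun x => c ^ (({i, j} : Finset (Fin n))ᶜ).card *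
    (h (x i - x j) * ∏ k ∈ (({i, j} : Finset (Fin n))ᶜ)ᶜ, s.indicator (1 : E2 → ℝ≥0∞) (x k)) with hgdef
  have hprod2 : ∀ x : Fin n → E2, ∏ k ∈ (({i, j} : Finset (Fin n))ᶜ)ᶜ, s.indicator
      (1 : E2 → ℝ≥0∞) (x k) = s.indicator (1 : E2 → ℝ≥0∞) (x i) * s.indicator (1 : E2 → ℝ≥0∞) (x j) := by
    intro x
    rw [compl_compl]
    rw [Finset.prod_insert (by simp [hij]), Finset.prod_singleton]
  have hg : Measurable g := by
    apply Measurable.mul measurable_const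
    apply Measurable.mul
    · exact hh.comp ((measurable_pi_apply i).sub (measurable_pi_apply j))
    · exact Finset.measurable_prod _ fun k _ => hind.comp (measurable_pi_apply k)
  have hGmeas : Measurable fun a : E2 => ∫⁻ b in s, h (a - b) := by
    have : Measurable (Function.uncurry fun a b : E2 => s.indicator (1 : E2 → ℝ≥0∞) b * h (a - b)) := by
      apply Measurable.mul
      · exact hind.comp measurable_snd
      · exact hh.comp (measurable_fst.sub measurable_snd)
    have h2 : Measurable fun a : E2 =>
        ∫⁻ b, s.indicator (1 : E2 → ℝ≥0∞) b * h (a - b) :=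
      Measurable.lintegral_prod_right' (f := fun p : E2 × E2 =>
        s.indicator (1 : E2 → ℝ≥0∞) p.2 * h (p.1 - p.2)) this
    have h3 : ∀ a : E2, (∫⁻ b, s.indicator (1 : E2 → ℝ≥0∞) b * h (a - b)) = ∫⁻ b in s, h (a - b) := by
      intro a
      rw [← lintegral_indicator hs]
      congr 1
      funext b
      by_cases hb : b ∈ s
      · rw [Set.indicator_of_mem hb, Set.indicator_of_mem hb]; simp
      · rw [Set.indicator_of_notMem hb, Set.indicator_of_notMem hb]; simp
    simpa only [h3] using h2
  rw [show ({i, j} : Finset (Fin n)) = insert i {j} from rfl,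
    lmarginal_insert _ hg (by simp [hij])]
  simp_rw [lmarginal_singleton]
  have heval : ∀ a b : E2,
      g (Function.update (Function.update (fun _ => (0 : E2)) i a) j b)
        = c ^ (n - 2) * (h (a - b) * (s.indicator (1 : E2 → ℝ≥0∞) a * s.indicator (1 : E2 → ℝ≥0∞) b)) := by
    intro a b
    have e1 : Function.update (Function.update (fun _ => (0 : E2)) i a) j b i = a := by
      rw [Function.update_of_ne hij, Function.update_self]
    have e2 : Function.update (Function.update (fun _ => (0 : E2)) i a) j b j = b :=
      Function.update_self _ _ _
    rw [hgdef]
    simp only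
    rw [hprod2, e1, e2, hcard]
  calc ∫⁻ a, ∫⁻ b, g (Function.update (Function.update (fun _ => (0 : E2)) i a) j b)
          ∂(μ j) ∂(μ i)
      = ∫⁻ a, ∫⁻ b, c ^ (n - 2) * (h (a - b) * (s.indicator (1 : E2 → ℝ≥0∞) a * s.indicator (1 : E2 → ℝ≥0∞) b))
          ∂(μ j) ∂(μ i) := by
        congr 1; funext a; congr 1; funext b; rw [heval a b]
    _ = ∫⁻ a, (c ^ (n - 2) * s.indicator (1 : E2 → ℝ≥0∞) a) * ∫⁻ b in s, h (a - b) ∂(μ i) := by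
        congr 1
        funext a
        calc ∫⁻ b, c ^ (n - 2) * (h (a - b) * (s.indicator (1 : E2 → ℝ≥0∞) a * s.indicator (1 : E2 → ℝ≥0∞) b)) ∂(μ j)
            = ∫⁻ b, (c ^ (n - 2) * s.indicator (1 : E2 → ℝ≥0∞) a) *
                (s.indicator (fun b => h (a - b)) b) ∂(μ j) := by
              congr 1
              funext b
              by_cases hb : b ∈ s
              · rw [Set.indicator_of_mem hb, Set.indicator_of_mem hb]
                simp only [Pi.one_apply]
                ring
              · rw [Set.indicator_of_notMem hb, Set.indicator_of_notMem hb]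
                simp
          _ = (c ^ (n - 2) * s.indicator (1 : E2 → ℝ≥0∞) a) * ∫⁻ b, s.indicator (fun b => h (a - b)) b
                ∂(μ j) := lintegral_const_mul _
                ((hh.comp (measurable_const.sub measurable_id)).indicator hs)
          _ = (c ^ (n - 2) * s.indicator (1 : E2 → ℝ≥0∞) a) * ∫⁻ b in s, h (a - b) := by
              rw [hμ]
              rw [lintegral_indicator hs]
    _ = c ^ (n - 2) * ∫⁻ a in s, ∫⁻ b in s, h (a - b) := by
        calc ∫⁻ a, (c ^ (n - 2) * s.indicator (1 : E2 → ℝ≥0∞) a) * ∫⁻ b in s, h (a - b) ∂(μ i)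
            = ∫⁻ a, c ^ (n - 2) * (s.indicator (fun a => ∫⁻ b in s, h (a - b)) a) ∂(μ i) := by
              congr 1
              funext a
              by_cases hA : a ∈ s
              · rw [Set.indicator_of_mem hA, Set.indicator_of_mem hA]
                simp only [Pi.one_apply]
                ring
              · rw [Set.indicator_of_notMem hA, Set.indicator_of_notMem hA]
                simp
          _ = c ^ (n - 2) * ∫⁻ a, s.indicator (fun a => ∫⁻ b in s, h (a - b)) a ∂(μ i) :=
              lintegral_const_mul _ (hGmeas.indicator hs)
          _ = c ^ (n - 2) * ∫⁻ a in s, ∫⁻ b in s, h (a - b) := by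
              rw [hμ, lintegral_indicator hs]

lemma stmt3_pair {n : ℕ} (i j : Fin n) (hij : i ≠ j) (M : ℕ) (D : ℝ≥0∞)
    (hD : ∀ r : ℝ, 0 < r → r ≤ 1 →
      ∫⁻ z in ball (0 : E2) r, ENNReal.ofReal ((1 + |Real.log ‖z‖|) ^ M)
        ≤ D * ENNReal.ofReal (r ^ 2 * (1 - Real.log r) ^ M))
    (lam : ℝ) (h0 : 0 < lam) (hle : lam ≤ Real.exp (-1)) :
    ∫⁻ x : Fin n → E2 in Set.univ.pi (fun _ => ball (0 : E2) lam),
        ENNReal.ofReal ((1 + |Real.log ‖x i - x j‖|) ^ M)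
      ≤ volume (ball (0 : E2) lam) ^ n *
        ((ENNReal.ofReal 4 * 2 ^ M * D * (volume (ball (0 : E2) 1))⁻¹)
          * ENNReal.ofReal (-Real.log lam) ^ M) := by
  have h2n : 2 ≤ n := by
    have h1 := i.isLt
    have h2 := j.isLt
    have h3 := Fin.val_ne_of_ne hij
    omega
  set V1 : ℝ≥0∞ := volume (ball (0 : E2) 1) with hV1
  set c : ℝ≥0∞ := volume (ball (0 : E2) lam) with hcdef
  set L : ℝ := -Real.log lam with hLdef
  have hL1 : 1 ≤ L := by
    have h1 : Real.log lam ≤ Real.log (Real.exp (-1)) := Real.log_le_log h0 hle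
    rw [Real.log_exp] at h1
    simp only [hLdef]
    linarith
  have h2lam1 : 2 * lam ≤ 1 := by
    have h2e : (2 : ℝ) ≤ Real.exp 1 := by
      have := Real.add_one_le_exp 1; linarith
    have hh : Real.exp (-1) ≤ 2⁻¹ := by
      rw [Real.exp_neg]
      exact inv_anti₀ (by norm_num) h2e
    linarith
  set h : E2 → ℝ≥0∞ := fun z => ENNReal.ofReal ((1 + |Real.log ‖z‖|) ^ M) with hhdef
  have hh : Measurable h := stmt3_measurable_hM M
  have hfub := stmt3_fubini i j hij h hh (ball (0 : E2) lam) measurableSet_ball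
  have hstep : ∫⁻ x : Fin n → E2 in Set.univ.pi (fun _ => ball (0 : E2) lam),
      ENNReal.ofReal ((1 + |Real.log ‖x i - x j‖|) ^ M)
      = c ^ (n - 2) * ∫⁻ a in ball (0 : E2) lam, ∫⁻ b in ball (0 : E2) lam, h (a - b) := hfub
  rw [hstep]
  have hIfix : ∀ a : E2, a ∈ ball (0 : E2) lam →
      (∫⁻ b in ball (0 : E2) lam, h (a - b)) ≤ ∫⁻ z in ball (0 : E2) (2 * lam), h z := by
    intro a ha
    have ha' : ‖a‖ < lam := mem_ball_zero_iff.mp ha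
    have key : ∫⁻ b in ball (0 : E2) lam, h (a - b)
        = ∫⁻ b in ball (0 : E2) lam, (ball (0 : E2) (2 * lam)).indicator h (a - b) := by
      apply setLIntegral_congr_fun measurableSet_ball
      intro b (hb : b ∈ ball (0 : E2) lam)
      show h (a - b) = (ball (0 : E2) (2 * lam)).indicator h (a - b)
      rw [Set.indicator_of_mem]
      rw [mem_ball_zero_iff]
      have hb' : ‖b‖ < lam := mem_ball_zero_iff.mp hb
      calc ‖a - b‖ ≤ ‖a‖ + ‖b‖ := norm_sub_le a b
        _ < 2 * lam := by linarith
    rw [key]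
    calc ∫⁻ b in ball (0 : E2) lam, (ball (0 : E2) (2 * lam)).indicator h (a - b)
        ≤ ∫⁻ b, (ball (0 : E2) (2 * lam)).indicator h (a - b) :=
          setLIntegral_le_lintegral _ _
      _ = ∫⁻ z, (ball (0 : E2) (2 * lam)).indicator h z :=
          (Measure.measurePreserving_sub_left volume a).lintegral_comp
            (hh.indicator measurableSet_ball)
      _ = ∫⁻ z in ball (0 : E2) (2 * lam), h z := lintegral_indicator measurableSet_ball h
  have houter : ∫⁻ a in ball (0 : E2) lam, ∫⁻ b in ball (0 : E2) lam, h (a - b)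
      ≤ (∫⁻ z in ball (0 : E2) (2 * lam), h z) * c := by
    calc ∫⁻ a in ball (0 : E2) lam, ∫⁻ b in ball (0 : E2) lam, h (a - b)
        ≤ ∫⁻ _ in ball (0 : E2) lam, (∫⁻ z in ball (0 : E2) (2 * lam), h z) :=
          setLIntegral_mono measurable_const hIfix
      _ = _ := setLIntegral_const _ _
  have hrad := hD (2 * lam) (by linarith) h2lam1
  have hreal : (2 * lam) ^ 2 * (1 - Real.log (2 * lam)) ^ M
      ≤ lam ^ 2 * (4 * 2 ^ M * L ^ M) := by
    have hlog2lam : Real.log (2 * lam) = Real.log 2 + Real.log lam :=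
      Real.log_mul (by norm_num) h0.ne'
    have hl2 : 0 ≤ Real.log 2 := Real.log_nonneg one_le_two
    have h1 : 1 - Real.log (2 * lam) ≤ 2 * L := by
      rw [hlog2lam]; simp only [hLdef]; linarith
    have h0' : 0 ≤ 1 - Real.log (2 * lam) := by
      have := Real.log_nonpos (by linarith : (0:ℝ) ≤ 2 * lam) h2lam1
      linarith
    calc (2 * lam) ^ 2 * (1 - Real.log (2 * lam)) ^ M
        ≤ (2 * lam) ^ 2 * (2 * L) ^ M := by
          exact mul_le_mul_of_nonneg_left (pow_le_pow_left₀ h0' h1 M) (by positivity)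
      _ = lam ^ 2 * (4 * 2 ^ M * L ^ M) := by rw [mul_pow, mul_pow]; ring
  have hc_ball : c = ENNReal.ofReal (lam ^ 2) * V1 := by
    have := Measure.addHaar_ball (volume : Measure E2) (0 : E2) h0.le
    rw [finrank_euclideanSpace_fin] at this
    exact this
  have hV1_0 : V1 ≠ 0 := (measure_ball_pos volume 0 one_pos).ne'
  have hV1_top : V1 ≠ ⊤ := measure_ball_lt_top.ne
  have hVV : V1 * V1⁻¹ = 1 := ENNReal.mul_inv_cancel hV1_0 hV1_top
  calc c ^ (n - 2) * ∫⁻ a in ball (0 : E2) lam, ∫⁻ b in ball (0 : E2) lam, h (a - b)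
      ≤ c ^ (n - 2) * ((D * ENNReal.ofReal ((2 * lam) ^ 2 * (1 - Real.log (2 * lam)) ^ M)) * c) := by
        gcongr
        exact le_trans houter (mul_le_mul_left hrad c)
    _ ≤ c ^ (n - 2) * ((D * ENNReal.ofReal (lam ^ 2 * (4 * 2 ^ M * L ^ M))) * c) := by
        gcongr
    _ = c ^ n * ((ENNReal.ofReal 4 * 2 ^ M * D * V1⁻¹) * ENNReal.ofReal L ^ M) := by
        have hn2 : n = (n - 2) + 1 + 1 := by omega
        have heq : (D * ENNReal.ofReal (lam ^ 2 * (4 * 2 ^ M * L ^ M))) * c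
            = c * c * ((ENNReal.ofReal 4 * 2 ^ M * D * V1⁻¹) * ENNReal.ofReal L ^ M) := by
          rw [ENNReal.ofReal_mul (by positivity : (0:ℝ) ≤ lam ^ 2),
            ENNReal.ofReal_mul (by positivity : (0:ℝ) ≤ (4:ℝ) * 2 ^ M),
            ENNReal.ofReal_mul (by norm_num : (0:ℝ) ≤ 4),
            ENNReal.ofReal_pow (by norm_num : (0:ℝ) ≤ 2),
            ENNReal.ofReal_pow (by linarith : (0:ℝ) ≤ L),
            ENNReal.ofReal_ofNat, (by norm_num : ENNReal.ofReal 2 = 2), hc_ball]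
          calc D * (ENNReal.ofReal (lam ^ 2) * ((4 : ℝ≥0∞) * (2 : ℝ≥0∞) ^ M
                  * ENNReal.ofReal L ^ M)) * (ENNReal.ofReal (lam ^ 2) * V1)
              = ENNReal.ofReal (lam ^ 2) * ENNReal.ofReal (lam ^ 2) * V1
                  * 4 * 2 ^ M * D * ENNReal.ofReal L ^ M := by ring
            _ = (V1 * V1⁻¹) * (ENNReal.ofReal (lam ^ 2) * ENNReal.ofReal (lam ^ 2) * V1
                  * 4 * 2 ^ M * D * ENNReal.ofReal L ^ M) := by
                rw [hVV, one_mul]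
            _ = ENNReal.ofReal (lam ^ 2) * V1 * (ENNReal.ofReal (lam ^ 2) * V1)
                  * ((4 : ℝ≥0∞) * 2 ^ M * D * V1⁻¹ * ENNReal.ofReal L ^ M) := by ring
        rw [heq]
        conv_rhs => rw [hn2]
        rw [pow_succ, pow_succ]
        ring

/-- For `n ≥ 1` and nonnegative integers `(α_{ij})_{i≠j}` there is a constant `C`
(depending only on `n` and the `α_{ij}`) such that for every `λ ∈ (0,e⁻¹]` the integrand
`∏_{i≠j}(1+|log|x_i−x_j||)^{2α_{ij}}` is integrable on `B_λⁿ` (so all these integrals are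
finite) and its `n`-fold ball average is at most `C |log λ|^{2Σα_{ij}}`. -/
theorem stmt3 (n : ℕ) (hn : 1 ≤ n) (α : Fin n → Fin n → ℕ) :
    ∃ C : ℝ, ∀ lam ∈ Set.Ioc (0 : ℝ) (Real.exp (-1)),
      IntegrableOn
          (fun x : Fin n → EuclideanSpace ℝ (Fin 2) =>
            ∏ i, ∏ j, if i = j then 1 else (1 + |Real.log ‖x i - x j‖|) ^ (2 * α i j))
          (Set.univ.pi fun _ : Fin n => Metric.ball (0 : EuclideanSpace ℝ (Fin 2)) lam)
          volume ∧
        ((volume (Metric.ball (0 : EuclideanSpace ℝ (Fin 2)) lam)).toReal ^ n)⁻¹ *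
            (∫ x in Set.univ.pi fun _ : Fin n => Metric.ball (0 : EuclideanSpace ℝ (Fin 2)) lam,
              ∏ i, ∏ j, if i = j then 1 else (1 + |Real.log ‖x i - x j‖|) ^ (2 * α i j))
          ≤ C * |Real.log lam| ^ (2 * ∑ i, ∑ j, if i = j then 0 else α i j) := by
  classical
  set N : ℕ := n * n with hNdef
  have hNpos : 0 < N := Nat.mul_pos hn hn
  have hNR : ((N : ℝ)) ≠ 0 := Nat.cast_ne_zero.mpr hNpos.ne'
  set a : Fin n × Fin n → ℕ := fun p => if p.1 = p.2 then 0 else α p.1 p.2 with hadef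
  set M : Fin n × Fin n → ℕ := fun p => 2 * a p * N with hMdef
  choose D hDtop hD using fun p : Fin n × Fin n => stmt3_radial (M p)
  set V1 : ℝ≥0∞ := volume (ball (0 : E2) 1) with hV1def
  have hV1_0 : V1 ≠ 0 := (measure_ball_pos volume 0 one_pos).ne'
  set Kc : Fin n × Fin n → ℝ≥0∞ := fun p => if p.1 = p.2 then 1 else
    ENNReal.ofReal 4 * 2 ^ (M p) * D p * V1⁻¹ with hKcdef
  have hKc_top : ∀ p, Kc p ≠ ⊤ := by
    intro p
    rw [hKcdef]
    dsimp only
    split_ifs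
    · exact ENNReal.one_ne_top
    · exact ENNReal.mul_ne_top (ENNReal.mul_ne_top (ENNReal.mul_ne_top ENNReal.ofReal_ne_top
        (ENNReal.pow_ne_top ENNReal.ofNat_ne_top)) (hDtop p)) (ENNReal.inv_ne_top.mpr hV1_0)
  set CE : ℝ≥0∞ := ∏ p : Fin n × Fin n, Kc p ^ ((N : ℝ)⁻¹) with hCEdef
  have hCE_top : CE ≠ ⊤ := by
    rw [hCEdef]
    exact (ENNReal.prod_lt_top (fun p _ =>
      (ENNReal.rpow_ne_top_of_nonneg (by positivity) (hKc_top p)).lt_top)).ne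
  have hcard : Fintype.card (Fin n × Fin n) = N := by
    rw [Fintype.card_prod, Fintype.card_fin]
  set Sg : ℕ := ∑ i, ∑ j, if i = j then 0 else α i j with hSgdef
  refine ⟨CE.toReal, ?_⟩
  rintro lam ⟨h0, hle⟩
  set S : Set (Fin n → E2) := Set.univ.pi fun _ => ball (0 : E2) lam with hSdef
  have hSmeas : MeasurableSet S := MeasurableSet.univ_pi fun _ => measurableSet_ball
  set c : ℝ≥0∞ := volume (ball (0 : E2) lam) with hcdef
  have hc0 : c ≠ 0 := (measure_ball_pos volume 0 h0).ne'
  have hcT : c ≠ ⊤ := measure_ball_lt_top.ne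
  have hvolS : volume S = c ^ n := by
    rw [hSdef, volume_pi_pi]
    rw [Finset.prod_const, Finset.card_univ, Fintype.card_fin]
  set L : ℝ := -Real.log lam with hLdef
  have hL1 : 1 ≤ L := by
    have h1 : Real.log lam ≤ Real.log (Real.exp (-1)) := Real.log_le_log h0 hle
    rw [Real.log_exp] at h1
    simp only [hLdef]
    linarith
  have hL0 : 0 ≤ L := by linarith
  have habs : |Real.log lam| = L := by
    rw [abs_of_nonpos (by simp only [hLdef] at hL1; linarith)]
  set F : (Fin n → E2) → ℝ := fun x =>
    ∏ i, ∏ j, if i = j then 1 else (1 + |Real.log ‖x i - x j‖|) ^ (2 * α i j) with hFdef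
  have hFnn : ∀ x, 0 ≤ F x := fun x =>
    Finset.prod_nonneg fun i _ => Finset.prod_nonneg fun j _ => by
      split_ifs
      · norm_num
      · positivity
  have hFmeas : Measurable F := by
    apply Finset.measurable_prod
    intro i _
    apply Finset.measurable_prod
    intro j _
    by_cases hij : i = j
    · simp only [hij, if_true]
      exact measurable_const
    · simp only [hij, if_false]
      have h1 : Measurable fun x : Fin n → E2 => x i - x j :=
        (measurable_pi_apply i).sub (measurable_pi_apply j)
      have h2 : Measurable fun z : E2 => Real.log ‖z‖ :=
        Real.measurable_log.comp continuous_norm.measurable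
      exact ((h2.comp h1).abs.const_add 1).pow_const _
  set fp : Fin n × Fin n → (Fin n → E2) → ℝ≥0∞ := fun p x =>
    ENNReal.ofReal ((1 + |Real.log ‖x p.1 - x p.2‖|) ^ (M p)) with hfpdef
  have hfpmeas : ∀ p, Measurable (fp p) := by
    intro p
    have h1 : Measurable fun x : Fin n → E2 => x p.1 - x p.2 :=
      (measurable_pi_apply p.1).sub (measurable_pi_apply p.2)
    have h2 : Measurable fun z : E2 => Real.log ‖z‖ :=
      Real.measurable_log.comp continuous_norm.measurable
    exact ENNReal.measurable_ofReal.comp (((h2.comp h1).abs.const_add 1).pow_const _)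
  have hpowN : ∀ (y : ℝ≥0∞) (k : ℕ), (y ^ (k * N)) ^ ((N : ℝ)⁻¹) = y ^ k := by
    intro y k
    rw [pow_mul, ← ENNReal.rpow_natCast (y ^ k) N, ← ENNReal.rpow_mul,
      mul_inv_cancel₀ hNR, ENNReal.rpow_one]
  have hofF : ∀ x, ENNReal.ofReal (F x) = ∏ p : Fin n × Fin n, (fp p x) ^ ((N : ℝ)⁻¹) := by
    intro x
    have e1 : F x = ∏ p : Fin n × Fin n, (1 + |Real.log ‖x p.1 - x p.2‖|) ^ (2 * a p) := by
      rw [hFdef]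
      dsimp only
      rw [Fintype.prod_prod_type
        (f := fun p : Fin n × Fin n => (1 + |Real.log ‖x p.1 - x p.2‖|) ^ (2 * a p))]
      apply Finset.prod_congr rfl
      intro i _
      apply Finset.prod_congr rfl
      intro j _
      rw [hadef]
      by_cases hij : i = j
      · simp [hij]
      · simp [hij]
    rw [e1, ENNReal.ofReal_prod_of_nonneg (fun p _ => by positivity)]
    apply Finset.prod_congr rfl
    intro p _
    rw [hfpdef]
    dsimp only
    rw [ENNReal.ofReal_pow (by positivity), ENNReal.ofReal_pow (by positivity), hMdef]
    exact (hpowN _ (2 * a p)).symm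
  have hIp : ∀ p : Fin n × Fin n,
      ∫⁻ x in S, fp p x ≤ c ^ n * (Kc p * ENNReal.ofReal L ^ (M p)) := by
    intro p
    by_cases hp : p.1 = p.2
    · have hM0 : M p = 0 := by
        rw [hMdef]
        dsimp only
        rw [hadef]
        dsimp only
        rw [if_pos hp]
        ring
      have hfp1 : fp p = fun _ => 1 := by
        funext x
        rw [hfpdef]
        dsimp only
        rw [hM0, pow_zero]
        exact ENNReal.ofReal_one
      rw [hfp1, hKcdef]
      dsimp only
      rw [if_pos hp, hM0, pow_zero]
      rw [lintegral_one, Measure.restrict_apply_univ, hvolS]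
      simp
    · have hb := stmt3_pair p.1 p.2 hp (M p) (D p) (hD p) lam h0 hle
      rw [hKcdef]
      dsimp only
      rw [if_neg hp]
      exact hb
  have hHold := ENNReal.lintegral_prod_norm_pow_le (μ := volume.restrict S) Finset.univ
      (f := fun p => fp p) (fun p _ => (hfpmeas p).aemeasurable)
      (p := fun _ => (N : ℝ)⁻¹)
      (by rw [Finset.sum_const, Finset.card_univ, hcard, nsmul_eq_mul, mul_inv_cancel₀ hNR])
      (fun p _ => by positivity)
  have hmaster : ∫⁻ x in S, ENNReal.ofReal (F x) ≤ c ^ n * CE * ENNReal.ofReal L ^ (2 * Sg) := by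
    calc ∫⁻ x in S, ENNReal.ofReal (F x)
        = ∫⁻ x in S, ∏ p : Fin n × Fin n, (fp p x) ^ ((N : ℝ)⁻¹) :=
          lintegral_congr fun x => hofF x
      _ ≤ ∏ p : Fin n × Fin n, (∫⁻ x in S, fp p x) ^ ((N : ℝ)⁻¹) := hHold
      _ ≤ ∏ p : Fin n × Fin n, (c ^ n * (Kc p * ENNReal.ofReal L ^ (M p))) ^ ((N : ℝ)⁻¹) :=
          Finset.prod_le_prod' fun p _ => ENNReal.rpow_le_rpow (hIp p) (by positivity)
      _ = c ^ n * CE * ENNReal.ofReal L ^ (2 * Sg) := by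
          have hsplit : ∀ p : Fin n × Fin n,
              (c ^ n * (Kc p * ENNReal.ofReal L ^ (M p))) ^ ((N : ℝ)⁻¹)
              = (c ^ n) ^ ((N : ℝ)⁻¹) * (Kc p ^ ((N : ℝ)⁻¹) * ENNReal.ofReal L ^ (2 * a p)) := by
            intro p
            rw [ENNReal.mul_rpow_of_nonneg _ _ (by positivity),
              ENNReal.mul_rpow_of_nonneg _ _ (by positivity), hMdef]
            dsimp only
            rw [hpowN (ENNReal.ofReal L) (2 * a p)]
          rw [Finset.prod_congr rfl (fun p _ => hsplit p), Finset.prod_mul_distrib,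
            Finset.prod_mul_distrib, Finset.prod_const, Finset.card_univ, hcard]
          have hcn : ((c ^ n) ^ ((N : ℝ)⁻¹)) ^ N = c ^ n := by
            rw [← ENNReal.rpow_natCast ((c ^ n) ^ ((N : ℝ)⁻¹)) N, ← ENNReal.rpow_mul,
              inv_mul_cancel₀ hNR, ENNReal.rpow_one]
          rw [hcn, Finset.prod_pow_eq_pow_sum]
          have hsum2 : ∑ p : Fin n × Fin n, 2 * a p = 2 * Sg := by
            rw [← Finset.mul_sum]
            congr 1
            rw [hSgdef, Fintype.sum_prod_type]
          rw [hsum2, hCEdef, mul_assoc]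
  have hRHS_top : c ^ n * CE * ENNReal.ofReal L ^ (2 * Sg) ≠ ⊤ :=
    ENNReal.mul_ne_top (ENNReal.mul_ne_top (ENNReal.pow_ne_top hcT) hCE_top)
      (ENNReal.pow_ne_top ENNReal.ofReal_ne_top)
  have hfin : ∫⁻ x in S, ENNReal.ofReal (F x) < ⊤ :=
    lt_of_le_of_lt hmaster (lt_top_iff_ne_top.mpr hRHS_top)
  constructor
  · exact ⟨hFmeas.aestronglyMeasurable,
      (hasFiniteIntegral_iff_ofReal (Filter.Eventually.of_forall fun x => hFnn x)).mpr hfin⟩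
  · have hint : ∫ x in S, F x ∂volume = (∫⁻ x in S, ENNReal.ofReal (F x)).toReal :=
      integral_eq_lintegral_of_nonneg_ae (Filter.Eventually.of_forall fun x => hFnn x)
        hFmeas.aestronglyMeasurable
    rw [hint, habs]
    have h1 : (∫⁻ x in S, ENNReal.ofReal (F x)).toReal
        ≤ (c ^ n * CE * ENNReal.ofReal L ^ (2 * Sg)).toReal :=
      ENNReal.toReal_mono hRHS_top hmaster
    have h2 : (c ^ n * CE * ENNReal.ofReal L ^ (2 * Sg)).toReal
        = c.toReal ^ n * CE.toReal * L ^ (2 * Sg) := by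
      rw [ENNReal.toReal_mul, ENNReal.toReal_mul, ENNReal.toReal_pow, ENNReal.toReal_pow,
        ENNReal.toReal_ofReal hL0]
    have hc_pos : 0 < c.toReal := ENNReal.toReal_pos hc0 hcT
    calc (c.toReal ^ n)⁻¹ * (∫⁻ x in S, ENNReal.ofReal (F x)).toReal
        ≤ (c.toReal ^ n)⁻¹ * (c.toReal ^ n * CE.toReal * L ^ (2 * Sg)) := by
          apply mul_le_mul_of_nonneg_left _ (by positivity)
          rw [← h2]
          exact h1
      _ = CE.toReal * L ^ (2 * Sg) := by
          field_simp
end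

section
/- There exists a constant C such that for every λ ∈ (0, e^{-1}] and every x̃ ∈ ℝ² with |x̃| ≤ λ, ⨍_{B_λ} (1 + |log |x − x̃||)² dx ≤ C · |log λ|². -/
open MeasureTheory Real Metric
open scoped ENNReal

noncomputable def SS : ℝ := ∑' k : ℕ, ((k : ℝ) + 2) ^ 2 * (1 / 4) ^ k

lemma SS_summable : Summable (fun k : ℕ => ((k : ℝ) + 2) ^ 2 * (1 / 4 : ℝ) ^ k) := by
  have h : Summable (fun n : ℕ => (n : ℝ) ^ 2 * (1 / 4 : ℝ) ^ n) :=
    summable_pow_mul_geometric_of_norm_lt_one 2 (by rw [norm_eq_abs, abs_lt]; norm_num)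
  have h2 := (h.comp_injective (add_left_injective 2)).mul_left (16 : ℝ)
  refine h2.congr fun k => ?_
  simp only [Function.comp]
  push_cast
  ring

lemma SS_nonneg : 0 ≤ SS :=
  tsum_nonneg fun k => by positivity

/-- There is a constant `C` such that for every `λ ∈ (0,e⁻¹]` and every `x̃ ∈ ℝ²` with
`|x̃| ≤ λ`, the ball average `⨍_{B_λ} (1+|log|x−x̃||)² dx` is at most `C |log λ|²`. -/
theorem stmt4 :
    ∃ C : ℝ, ∀ lam ∈ Set.Ioc (0 : ℝ) (Real.exp (-1)),
      ∀ xt : EuclideanSpace ℝ (Fin 2), ‖xt‖ ≤ lam →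
        ((volume (Metric.ball (0 : EuclideanSpace ℝ (Fin 2)) lam)).toReal)⁻¹ *
            (∫ x in Metric.ball (0 : EuclideanSpace ℝ (Fin 2)) lam,
              (1 + |Real.log ‖x - xt‖|) ^ 2)
          ≤ C * |Real.log lam| ^ 2 := by
  refine ⟨4 * SS, ?_⟩
  rintro lam ⟨hl0, hle⟩ xt hxt
  set L : ℝ := |Real.log lam| with hLdef
  -- basic facts about lam and L
  have hexp2 : Real.exp (-1) < 1 / 2 := by
    rw [Real.exp_neg]
    rw [inv_lt_comm₀ (Real.exp_pos 1) (by norm_num)]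
    calc (1/2 : ℝ)⁻¹ = 2 := by norm_num
    _ < 2.7182818283 := by norm_num
    _ < Real.exp 1 := Real.exp_one_gt_d9
  have hlam2 : 2 * lam < 1 := by nlinarith [hle, hexp2]
  have hlam1 : lam < 1 := by linarith
  have hloglam : Real.log lam ≤ -1 := by
    rw [Real.log_le_iff_le_exp hl0]; exact hle
  have hL1 : 1 ≤ L := by
    rw [hLdef, abs_of_nonpos (by linarith)]; linarith
  have hL0 : 0 ≤ L := by linarith
  have hLlog : L = -Real.log lam := by
    rw [hLdef, abs_of_nonpos (by linarith)]
  -- the function and its measurability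
  set f : EuclideanSpace ℝ (Fin 2) → ℝ := fun x => (1 + |Real.log ‖x - xt‖|) ^ 2 with hf
  have hfm : Measurable f := by
    have h1 : Measurable fun x : EuclideanSpace ℝ (Fin 2) => ‖x - xt‖ :=
      (continuous_id.sub continuous_const).norm.measurable
    exact ((Real.measurable_log.comp h1).abs.const_add 1).pow_const 2
  have hfnn : ∀ x, 0 ≤ f x := fun x => by positivity
  -- dyadic annuli
  set s : ℕ → Set (EuclideanSpace ℝ (Fin 2)) := fun k =>
    {x | x ∈ ball (0 : EuclideanSpace ℝ (Fin 2)) lam ∧ 2 * lam * (1/2) ^ (k+1) ≤ ‖x - xt‖ ∧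
      ‖x - xt‖ < 2 * lam * (1/2) ^ k} with hs
  have hsm : ∀ k, MeasurableSet (s k) := by
    intro k
    have h1 : Measurable fun x : EuclideanSpace ℝ (Fin 2) => ‖x - xt‖ :=
      (continuous_id.sub continuous_const).norm.measurable
    exact (measurableSet_ball.inter
      ((h1 measurableSet_Ici).inter (h1 measurableSet_Iio)))
  -- coverage
  have hcover : ball (0 : EuclideanSpace ℝ (Fin 2)) lam \ {xt} ⊆ ⋃ k, s k := by
    rintro x ⟨hxball, hxne⟩
    have hxne' : x ≠ xt := hxne
    have hr0 : 0 < ‖x - xt‖ := by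
      rw [norm_pos_iff, sub_ne_zero]; exact hxne'
    have hrlt : ‖x - xt‖ < 2 * lam := by
      calc ‖x - xt‖ ≤ ‖x‖ + ‖xt‖ := norm_sub_le x xt
      _ < lam + lam := by
        have := mem_ball_zero_iff.1 hxball
        linarith [hxt, this]
      _ = 2 * lam := by ring
    have hP : ∃ k : ℕ, 2 * lam * (1/2) ^ (k+1) ≤ ‖x - xt‖ := by
      obtain ⟨n, hn⟩ := exists_pow_lt_of_lt_one
        (show (0:ℝ) < ‖x - xt‖ / (2 * lam) by positivity)
        (show (1/2 : ℝ) < 1 by norm_num)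
      refine ⟨n, ?_⟩
      have h2l : (0:ℝ) < 2 * lam := by linarith
      have hlt : 2 * lam * (1/2) ^ n < ‖x - xt‖ := by
        rw [lt_div_iff₀ h2l] at hn
        nlinarith [hn]
      have h12 : ((1:ℝ)/2) ^ (n+1) ≤ (1/2) ^ n := by
        rw [pow_succ]
        nlinarith [pow_nonneg (show (0:ℝ) ≤ 1/2 by norm_num) n]
      nlinarith [h12, hlt, h2l]
    classical
    set k0 := Nat.find hP with hk0
    have hk0P : 2 * lam * (1/2) ^ (k0+1) ≤ ‖x - xt‖ := Nat.find_spec hP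
    have hupper : ‖x - xt‖ < 2 * lam * (1/2) ^ k0 := by
      rcases Nat.eq_zero_or_pos k0 with h0 | hpos
      · rw [h0]; simpa using hrlt
      · have := Nat.find_min hP (m := k0 - 1) (by omega)
        push_neg at this
        have heq : k0 - 1 + 1 = k0 := by omega
        rwa [heq] at this
    exact Set.mem_iUnion.2 ⟨k0, hxball, hk0P, hupper⟩
  -- pointwise bound on each annulus
  have hbound : ∀ k : ℕ, ∀ x ∈ s k, f x ≤ L ^ 2 * ((k : ℝ) + 2) ^ 2 := by
    intro k x hx
    obtain ⟨-, hlo, hhi⟩ := hx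
    have hr0 : 0 < ‖x - xt‖ := lt_of_lt_of_le (by positivity) hlo
    have hr1 : ‖x - xt‖ < 1 := by
      have h1 : 2 * lam * (1/2) ^ k ≤ 2 * lam := by
        nlinarith [pow_le_one₀ (show (0:ℝ) ≤ 1/2 by norm_num)
          (show (1/2:ℝ) ≤ 1 by norm_num) (n := k), hl0]
      linarith
    have hlogneg : Real.log ‖x - xt‖ < 0 := Real.log_neg hr0 hr1
    have hlogle : -Real.log ‖x - xt‖ ≤ L + (k : ℝ) * Real.log 2 := by
      have hmono : Real.log (2 * lam * (1/2) ^ (k+1)) ≤ Real.log ‖x - xt‖ :=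
        Real.log_le_log (by positivity) hlo
      have hcalc : Real.log (2 * lam * (1/2) ^ (k+1)) =
          Real.log lam - (k : ℝ) * Real.log 2 := by
        rw [Real.log_mul (by positivity) (by positivity),
          Real.log_mul (by norm_num) (ne_of_gt hl0),
          Real.log_pow, Real.log_div (by norm_num) (by norm_num), Real.log_one]
        push_cast
        ring
      rw [hcalc] at hmono
      rw [hLlog]
      linarith
    have hlog2 : Real.log 2 ≤ 1 := by
      have := Real.log_two_lt_d9
      linarith
    have hkey : 1 + |Real.log ‖x - xt‖| ≤ L * ((k : ℝ) + 2) := by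
      rw [abs_of_nonpos hlogneg.le]
      have h1 : -Real.log ‖x - xt‖ ≤ L + (k : ℝ) := by
        have hk0 : (0:ℝ) ≤ (k:ℝ) := Nat.cast_nonneg k
        nlinarith [hlogle, hlog2, Real.log_pos (by norm_num : (1:ℝ) < 2)]
      have hk0 : (0:ℝ) ≤ (k:ℝ) := Nat.cast_nonneg k
      nlinarith [h1, hL1, hk0]
    calc f x = (1 + |Real.log ‖x - xt‖|) ^ 2 := rfl
    _ ≤ (L * ((k : ℝ) + 2)) ^ 2 := by
        apply pow_le_pow_left₀ (by positivity) hkey 2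
    _ = L ^ 2 * ((k : ℝ) + 2) ^ 2 := by ring
  -- volume facts
  set V : ℝ≥0∞ := volume (ball (0 : EuclideanSpace ℝ (Fin 2)) 1) with hV
  have hfinrank : Module.finrank ℝ (EuclideanSpace ℝ (Fin 2)) = 2 := by
    simp
  have hballvol : ∀ (c : EuclideanSpace ℝ (Fin 2)) (R : ℝ), 0 ≤ R →
      volume (ball c R) = ENNReal.ofReal (R ^ 2) * V := by
    intro c R hR
    rw [hV, Measure.addHaar_ball volume c hR, hfinrank]
  have hVne : V ≠ ⊤ := (measure_ball_lt_top).ne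
  have hVpos : 0 < V := measure_ball_pos volume 0 one_pos
  have hVtpos : 0 < V.toReal := ENNReal.toReal_pos hVpos.ne' hVne
  -- measure of annuli
  have hsvol : ∀ k : ℕ, volume (s k) ≤ ENNReal.ofReal (4 * lam ^ 2 * (1/4) ^ k) * V := by
    intro k
    have hsub : s k ⊆ ball xt (2 * lam * (1/2) ^ k) := by
      rintro x ⟨-, -, hhi⟩
      rw [mem_ball_iff_norm]
      exact hhi
    calc volume (s k) ≤ volume (ball xt (2 * lam * (1/2) ^ k)) := measure_mono hsub
    _ = ENNReal.ofReal ((2 * lam * (1/2) ^ k) ^ 2) * V :=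
        hballvol _ _ (by positivity)
    _ = ENNReal.ofReal (4 * lam ^ 2 * (1/4) ^ k) * V := by
        congr 1
        congr 1
        rw [mul_pow, mul_pow, ← pow_mul]
        norm_num
        rw [show k * 2 = 2 * k by ring, pow_mul]
        norm_num
  -- main lintegral estimate
  set T : ℝ≥0∞ := ∫⁻ x in ball (0 : EuclideanSpace ℝ (Fin 2)) lam, ENNReal.ofReal (f x) with hT
  have hTle : T ≤ ENNReal.ofReal (4 * lam ^ 2 * L ^ 2 * SS) * V := by
    have hae : (ball (0 : EuclideanSpace ℝ (Fin 2)) lam : Set (EuclideanSpace ℝ (Fin 2))) =ᵐ[volume] (ball (0 : EuclideanSpace ℝ (Fin 2)) lam \ ({xt} : Set (EuclideanSpace ℝ (Fin 2)))) := by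
      refine (MeasureTheory.diff_ae_eq_self.2 ?_).symm
      exact measure_mono_null Set.inter_subset_right (measure_singleton xt)
    calc T = ∫⁻ x in ball (0 : EuclideanSpace ℝ (Fin 2)) lam \ {xt}, ENNReal.ofReal (f x) :=
        setLIntegral_congr hae
    _ ≤ ∫⁻ x in ⋃ k, s k, ENNReal.ofReal (f x) := lintegral_mono_set hcover
    _ ≤ ∑' k : ℕ, ∫⁻ x in s k, ENNReal.ofReal (f x) := lintegral_iUnion_le _ _
    _ ≤ ∑' k : ℕ, ENNReal.ofReal (L ^ 2 * ((k : ℝ) + 2) ^ 2) * (ENNReal.ofReal (4 * lam ^ 2 * (1/4) ^ k) * V) := by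
        refine ENNReal.tsum_le_tsum fun k => ?_
        calc ∫⁻ x in s k, ENNReal.ofReal (f x)
            ≤ ∫⁻ _ in s k, ENNReal.ofReal (L ^ 2 * ((k : ℝ) + 2) ^ 2) := by
              refine setLIntegral_mono measurable_const fun x hx => ?_
              exact ENNReal.ofReal_le_ofReal (hbound k x hx)
        _ = ENNReal.ofReal (L ^ 2 * ((k : ℝ) + 2) ^ 2) * volume (s k) :=
              setLIntegral_const _ _
        _ ≤ _ := mul_le_mul_right (hsvol k) _
    _ = (∑' k : ℕ, ENNReal.ofReal (4 * lam ^ 2 * L ^ 2 * (((k : ℝ) + 2) ^ 2 * (1/4) ^ k))) * V := by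
        rw [← ENNReal.tsum_mul_right]
        congr 1
        funext k
        rw [← mul_assoc, ← ENNReal.ofReal_mul (by positivity)]
        congr 2
        ring
    _ = ENNReal.ofReal (4 * lam ^ 2 * L ^ 2 * SS) * V := by
        congr 1
        rw [← ENNReal.ofReal_tsum_of_nonneg (fun k => by positivity)
          (SS_summable.mul_left _)]
        congr 1
        rw [SS, ← tsum_mul_left]
  -- convert Bochner integral to lintegral
  have hint : ∫ x in ball (0 : EuclideanSpace ℝ (Fin 2)) lam, f x = T.toReal := by
    rw [hT, integral_eq_lintegral_of_nonneg_ae (ae_of_all _ fun x => hfnn x)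
      hfm.aestronglyMeasurable]
  have hintle : ∫ x in ball (0 : EuclideanSpace ℝ (Fin 2)) lam, f x ≤ 4 * lam ^ 2 * L ^ 2 * SS * V.toReal := by
    rw [hint]
    calc T.toReal ≤ (ENNReal.ofReal (4 * lam ^ 2 * L ^ 2 * SS) * V).toReal := by
          apply ENNReal.toReal_mono _ hTle
          exact ENNReal.mul_ne_top ENNReal.ofReal_ne_top hVne
    _ = 4 * lam ^ 2 * L ^ 2 * SS * V.toReal := by
          rw [ENNReal.toReal_mul, ENNReal.toReal_ofReal (mul_nonneg (by positivity) SS_nonneg)]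
  -- the volume of the big ball
  have hvolB : (volume (ball (0 : EuclideanSpace ℝ (Fin 2)) lam)).toReal = lam ^ 2 * V.toReal := by
    rw [hballvol 0 lam hl0.le, ENNReal.toReal_mul, ENNReal.toReal_ofReal (by positivity)]
  rw [hvolB]
  have hpos : 0 < lam ^ 2 * V.toReal := by positivity
  rw [inv_mul_le_iff₀ hpos]
  calc ∫ x in ball (0 : EuclideanSpace ℝ (Fin 2)) lam, f x ≤ 4 * lam ^ 2 * L ^ 2 * SS * V.toReal := hintle
  _ ≤ lam ^ 2 * V.toReal * (4 * SS * L ^ 2) := le_of_eq (by ring)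
end

section
/- Let H be a separable real Hilbert space with Hilbert (orthonormal) basis (e_j)_{j ∈ ℕ}, let S : H → H be a bounded linear operator with M := Σ_j ‖S e_j‖² < ∞, let n ≥ 1, and let B : H × ⋯ × H → ℝ (n factors) be an n-multilinear map such that for some C ≥ 0, |B(x₁, …, xₙ)| ≤ C ∏_{i=1}^n ‖S x_i‖ for all x₁, …, xₙ ∈ H. Then Σ_{j₁, …, jₙ ∈ ℕ} |B(e_{j₁}, …, e_{jₙ})|² ≤ C² Mⁿ, and for all T₁, …, Tₙ ∈ H the absolutely convergent expansion B(T₁, …, Tₙ) = Σ_{j₁, …, jₙ ∈ ℕ} B(e_{j₁}, …, e_{jₙ}) ∏_{i=1}^n ⟨T_i, e_{j_i}⟩ holds. -/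
open scoped RealInnerProductSpace

set_option maxHeartbeats 1000000 in
private lemma hasSum_pi_prod : ∀ (n : ℕ) (f : Fin n → ℕ → ℝ) (a : Fin n → ℝ),
    (∀ i k, 0 ≤ f i k) → (∀ i, HasSum (f i) (a i)) →
    HasSum (fun j : Fin n → ℕ => ∏ i, f i (j i)) (∏ i, a i) := by
  intro n
  induction n with
  | zero =>
    intro f a _ _
    simpa using hasSum_fintype (fun _ : Fin 0 → ℕ => (1 : ℝ))
  | succ m ih =>
    intro f a h0 hs
    have ihm := ih (fun i => f i.succ) (fun i => a i.succ)
      (fun i k => h0 i.succ k) (fun i => hs i.succ)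
    have hsummul : Summable fun p : ℕ × (Fin m → ℕ) =>
        f 0 p.1 * ∏ i : Fin m, f i.succ (p.2 i) := by
      apply Summable.mul_of_nonneg (hs 0).summable ihm.summable
      · intro k; exact h0 0 k
      · intro j; exact Finset.prod_nonneg fun i _ => h0 _ _
    have h1 := (hs 0).mul ihm hsummul
    rw [← (Fin.consEquiv (fun _ : Fin (m + 1) => ℕ)).hasSum_iff]
    have heq : ((fun j : Fin (m + 1) → ℕ => ∏ i, f i (j i)) ∘
        (Fin.consEquiv (fun _ : Fin (m + 1) => ℕ)))
        = fun p : ℕ × (Fin m → ℕ) => f 0 p.1 * ∏ i : Fin m, f i.succ (p.2 i) := by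
      funext p
      simp [Fin.consEquiv, Fin.prod_univ_succ]
    rw [heq, Fin.prod_univ_succ]
    exact h1

/-- Expansion of an `n`-multilinear map dominated by a Hilbert–Schmidt type operator:
if `S : H → H` is bounded with `M = Σ_j ‖S e_j‖² < ∞` and
`|B(x₁,…,xₙ)| ≤ C ∏ᵢ ‖S xᵢ‖`, then `Σ_{j₁,…,jₙ} |B(e_{j₁},…,e_{jₙ})|² ≤ C² Mⁿ`
(and this sum converges), and for all `T₁,…,Tₙ ∈ H` the absolutely convergent expansion
`B(T₁,…,Tₙ) = Σ_{j₁,…,jₙ} B(e_{j₁},…,e_{jₙ}) ∏ᵢ ⟨Tᵢ, e_{jᵢ}⟩` holds. -/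
theorem stmt15 {H : Type*} [NormedAddCommGroup H] [InnerProductSpace ℝ H] [CompleteSpace H]
    (e : HilbertBasis ℕ ℝ H) (S : H →L[ℝ] H) (M : ℝ)
    (hM : HasSum (fun j : ℕ => ‖S (e j)‖ ^ 2) M)
    (n : ℕ) (hn : 1 ≤ n) (B : MultilinearMap ℝ (fun _ : Fin n => H) ℝ)
    (C : ℝ) (hC : 0 ≤ C)
    (hB : ∀ x : Fin n → H, |B x| ≤ C * ∏ i, ‖S (x i)‖) :
    Summable (fun j : Fin n → ℕ => |B fun i => e (j i)| ^ 2) ∧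
      (∑' j : Fin n → ℕ, |B fun i => e (j i)| ^ 2) ≤ C ^ 2 * M ^ n ∧
      ∀ T : Fin n → H,
        Summable (fun j : Fin n → ℕ => |(B fun i => e (j i)) * ∏ i, ⟪T i, e (j i)⟫|) ∧
          HasSum (fun j : Fin n → ℕ => (B fun i => e (j i)) * ∏ i, ⟪T i, e (j i)⟫) (B T) := by
  classical
  -- the dominating product sum
  have hSq : HasSum (fun j : Fin n → ℕ => ∏ i, ‖S (e (j i))‖ ^ 2) (M ^ n) := by
    have := hasSum_pi_prod n (fun _ k => ‖S (e k)‖ ^ 2) (fun _ => M)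
      (fun _ _ => sq_nonneg _) (fun _ => hM)
    simpa [Finset.prod_const] using this
  have hle : ∀ j : Fin n → ℕ,
      |B fun i => e (j i)| ^ 2 ≤ C ^ 2 * ∏ i, ‖S (e (j i))‖ ^ 2 := by
    intro j
    have h1 := hB (fun i => e (j i))
    have h2 : |B fun i => e (j i)| ^ 2 ≤ (C * ∏ i, ‖S (e (j i))‖) ^ 2 :=
      pow_le_pow_left₀ (abs_nonneg _) h1 2
    calc |B fun i => e (j i)| ^ 2 ≤ (C * ∏ i, ‖S (e (j i))‖) ^ 2 := h2
      _ = C ^ 2 * ∏ i, ‖S (e (j i))‖ ^ 2 := by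
          rw [mul_pow, Finset.prod_pow]
  have hdomsum : Summable (fun j : Fin n → ℕ => C ^ 2 * ∏ i, ‖S (e (j i))‖ ^ 2) :=
    hSq.summable.mul_left _
  have hsum1 : Summable (fun j : Fin n → ℕ => |B fun i => e (j i)| ^ 2) :=
    Summable.of_nonneg_of_le (fun _ => sq_nonneg _) hle hdomsum
  refine ⟨hsum1, ?_, ?_⟩
  · calc (∑' j : Fin n → ℕ, |B fun i => e (j i)| ^ 2)
        ≤ ∑' j : Fin n → ℕ, C ^ 2 * ∏ i, ‖S (e (j i))‖ ^ 2 :=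
          Summable.tsum_le_tsum hle hsum1 hdomsum
      _ = C ^ 2 * M ^ n := by rw [tsum_mul_left, hSq.tsum_eq]
  · intro T
    set g : Fin n → ℕ → ℝ := fun i k => ‖S (e k)‖ * |⟪T i, e k⟫| with hg
    have hg0 : ∀ i k, 0 ≤ g i k := fun i k => mul_nonneg (norm_nonneg _) (abs_nonneg _)
    have hgsum : ∀ i, Summable (g i) := by
      intro i
      have h2 : Summable (fun k => ⟪T i, e k⟫ ^ 2) := by
        have h := e.hasSum_inner_mul_inner (T i) (T i)
        have h' : HasSum (fun k => ⟪T i, e k⟫ ^ 2) ⟪T i, T i⟫ := by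
          have hfun : (fun k => ⟪T i, e k⟫ ^ 2) = fun k => ⟪T i, e k⟫ * ⟪e k, T i⟫ := by
            funext k
            rw [sq, real_inner_comm (e k) (T i)]
          rw [hfun]; exact h
        exact h'.summable
      have hb : ∀ k, g i k ≤ (‖S (e k)‖ ^ 2 + ⟪T i, e k⟫ ^ 2) / 2 := by
        intro k
        show ‖S (e k)‖ * |⟪T i, e k⟫| ≤ (‖S (e k)‖ ^ 2 + ⟪T i, e k⟫ ^ 2) / 2
        have h1 := sq_nonneg (‖S (e k)‖ - |⟪T i, e k⟫|)
        have habs : |⟪T i, e k⟫| ^ 2 = ⟪T i, e k⟫ ^ 2 := sq_abs _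
        nlinarith
      exact Summable.of_nonneg_of_le (hg0 i) hb ((hM.summable.add h2).div_const 2)
    have hG : HasSum (fun j : Fin n → ℕ => ∏ i, g i (j i)) (∏ i, ∑' k, g i k) :=
      hasSum_pi_prod n g _ hg0 (fun i => (hgsum i).hasSum)
    set F : (Fin n → ℕ) → ℝ :=
      fun j => (B fun i => e (j i)) * ∏ i, ⟪T i, e (j i)⟫ with hF
    have hdom : ∀ j : Fin n → ℕ, |F j| ≤ C * ∏ i, g i (j i) := by
      intro j
      have : |F j| = |B fun i => e (j i)| * ∏ i, |⟪T i, e (j i)⟫| := by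
        rw [hF, abs_mul, Finset.abs_prod]
      rw [this, hg]
      have hprodnn : (0 : ℝ) ≤ ∏ i, |⟪T i, e (j i)⟫| :=
        Finset.prod_nonneg fun i _ => abs_nonneg _
      calc (|B fun i => e (j i)|) * ∏ i, |⟪T i, e (j i)⟫|
          ≤ (C * ∏ i, ‖S (e (j i))‖) * ∏ i, |⟪T i, e (j i)⟫| := by
            exact mul_le_mul_of_nonneg_right (hB _) hprodnn
        _ = C * ∏ i, ‖S (e (j i))‖ * |⟪T i, e (j i)⟫| := by
            rw [Finset.prod_mul_distrib]; ring
    have habs : Summable (fun j : Fin n → ℕ => |F j|) :=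
      Summable.of_nonneg_of_le (fun _ => abs_nonneg _) hdom (hG.summable.mul_left C)
    refine ⟨habs, ?_⟩
    have hsumF : Summable F := summable_abs_iff.mp habs
    obtain ⟨L, hL⟩ := hsumF
    -- continuity of B
    have hBbound : ∀ x : Fin n → H, ‖B x‖ ≤ (C * ‖S‖ ^ n) * ∏ i, ‖x i‖ := by
      intro x
      calc ‖B x‖ = |B x| := rfl
        _ ≤ C * ∏ i, ‖S (x i)‖ := hB x
        _ ≤ C * ∏ i, ‖S‖ * ‖x i‖ := by
            apply mul_le_mul_of_nonneg_left _ hC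
            exact Finset.prod_le_prod (fun i _ => norm_nonneg _)
              (fun i _ => S.le_opNorm _)
        _ = (C * ‖S‖ ^ n) * ∏ i, ‖x i‖ := by
            rw [Finset.prod_mul_distrib, Finset.prod_const, Finset.card_univ,
              Fintype.card_fin, mul_assoc]
    let Bc : ContinuousMultilinearMap ℝ (fun _ : Fin n => H) ℝ :=
      B.mkContinuous (C * ‖S‖ ^ n) hBbound
    have hBc : ∀ x : Fin n → H, Bc x = B x := fun _ => rfl
    -- partial sums over boxes
    have key : ∀ s : Finset ℕ, (∑ j ∈ Fintype.piFinset (fun _ : Fin n => s), F j)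
        = B (fun i => ∑ k ∈ s, ⟪T i, e k⟫ • e k) := by
      intro s
      rw [B.map_sum_finset]
      refine Finset.sum_congr rfl fun r _ => ?_
      rw [B.map_smul_univ]
      simp [hF, mul_comm]
    have hP : ∀ i, HasSum (fun k => ⟪T i, e k⟫ • e k) (T i) := by
      intro i
      have h := e.hasSum_repr (T i)
      convert h using 2 with k
      rw [e.repr_apply_apply, real_inner_comm]
    have t1 : Filter.Tendsto
        (fun s : Finset ℕ => B (fun i => ∑ k ∈ s, ⟪T i, e k⟫ • e k))
        Filter.atTop (nhds (B T)) := by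
      have hpt : Filter.Tendsto
          (fun s : Finset ℕ => (fun i => ∑ k ∈ s, ⟪T i, e k⟫ • e k))
          Filter.atTop (nhds T) := by
        rw [tendsto_pi_nhds]
        intro i
        exact hP i
      have := (Bc.cont.tendsto T).comp hpt
      exact this
    have htt : Filter.Tendsto (fun s : Finset ℕ => Fintype.piFinset fun _ : Fin n => s)
        Filter.atTop Filter.atTop := by
      apply Filter.tendsto_atTop_atTop_of_monotone
      · intro s t hst
        exact Fintype.piFinset_subset _ _ (fun _ => hst)
      · intro b
        refine ⟨b.sup (fun j => Finset.image j Finset.univ), fun j hj => ?_⟩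
        rw [Fintype.mem_piFinset]
        intro i
        exact Finset.mem_of_subset (Finset.le_sup hj)
          (Finset.mem_image_of_mem j (Finset.mem_univ i))
    have t2 : Filter.Tendsto
        (fun s : Finset ℕ => ∑ j ∈ Fintype.piFinset (fun _ : Fin n => s), F j)
        Filter.atTop (nhds L) := hL.comp htt
    have t2' : Filter.Tendsto
        (fun s : Finset ℕ => B (fun i => ∑ k ∈ s, ⟪T i, e k⟫ • e k))
        Filter.atTop (nhds L) := by
      simpa [key] using t2
    have : L = B T := tendsto_nhds_unique t2' t1
    rwa [this] at hL
end
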